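/- For any word σ ∈ I^k with k ≥ 1 and any (a,b) ∈ ℝ², ∫_{J_σ} ‖x − (a,b)‖² dP = (1/4^k)·((1/9^k)·(1/4) + ‖S_σ(1/2,1/2) − (a,b)‖²), where J_σ = S_σ([0,1]²). -/

import Mathlib

open MeasureTheory Set
open scoped ENNReal

/-- The four contractive similarities of ratio 1/3 generating the Sierpiński carpet.
`S 0, S 1, S 2, S 3` correspond to `S_1, S_2, S_3, S_4` in the paper. -/
noncomputable def S (i : Fin 4) (p : ℝ × ℝ) : ℝ × ℝ :=
  (p.1 / 3 + (if i = 1 ∨ i = 3 then (2 : ℝ) / 3 else 0),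
   p.2 / 3 + (if i = 2 ∨ i = 3 then (2 : ℝ) / 3 else 0))

/-- Composition `S_{σ_1} ∘ ⋯ ∘ S_{σ_k}` along a word `σ`. -/
noncomputable def Sw (σ : List (Fin 4)) : ℝ × ℝ → ℝ × ℝ :=
  σ.foldr (fun i g => S i ∘ g) id

/-- The unit square `J = [0,1] × [0,1]`. -/
def K : Set (ℝ × ℝ) := Icc (0, 0) (1, 1)

/-- The basic square `J_σ = S_σ([0,1]²)`. -/
noncomputable def Jw (σ : List (Fin 4)) : Set (ℝ × ℝ) := Sw σ '' K

-- offsets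
noncomputable def c1 (i : Fin 4) : ℝ := if i = 1 ∨ i = 3 then (2 : ℝ) / 3 else 0
noncomputable def c2 (i : Fin 4) : ℝ := if i = 2 ∨ i = 3 then (2 : ℝ) / 3 else 0

lemma S_eq (i : Fin 4) (p : ℝ × ℝ) : S i p = (p.1 / 3 + c1 i, p.2 / 3 + c2 i) := rfl

lemma c1_mem (i : Fin 4) : c1 i = 0 ∨ c1 i = 2/3 := by unfold c1; split_ifs <;> simp
lemma c2_mem (i : Fin 4) : c2 i = 0 ∨ c2 i = 2/3 := by unfold c2; split_ifs <;> simp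

lemma mem_K_iff (p : ℝ × ℝ) : p ∈ K ↔ 0 ≤ p.1 ∧ p.1 ≤ 1 ∧ 0 ≤ p.2 ∧ p.2 ≤ 1 := by
  simp [K, Prod.le_def, mem_Icc]; tauto

lemma continuous_S (i : Fin 4) : Continuous (S i) := by
  unfold S; fun_prop

lemma measurable_S (i : Fin 4) : Measurable (S i) := (continuous_S i).measurable

lemma S_inj (i : Fin 4) : Function.Injective (S i) := by
  intro p q h
  rw [S_eq, S_eq, Prod.ext_iff] at h
  simp only at h
  obtain ⟨h1, h2⟩ := h
  exact Prod.ext (by linarith) (by linarith)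

lemma S_mapsTo (i : Fin 4) : MapsTo (S i) K K := by
  intro p hp
  rw [mem_K_iff] at hp ⊢
  rw [S_eq]
  rcases c1_mem i with h1 | h1 <;> rcases c2_mem i with h2 | h2 <;>
    simp only [h1, h2] <;> refine ⟨by linarith [hp.1], by linarith [hp.2.1], by linarith [hp.2.2.1], by linarith [hp.2.2.2]⟩

lemma Sw_cons (i : Fin 4) (σ : List (Fin 4)) : Sw (i :: σ) = S i ∘ Sw σ := rfl
lemma Sw_nil : Sw [] = id := rfl

lemma Sw_mapsTo (σ : List (Fin 4)) : MapsTo (Sw σ) K K := by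
  induction σ with
  | nil => exact fun p hp => hp
  | cons i σ ih => rw [Sw_cons]; exact (S_mapsTo i).comp ih

lemma continuous_Sw (σ : List (Fin 4)) : Continuous (Sw σ) := by
  induction σ with
  | nil => exact continuous_id
  | cons i σ ih => rw [Sw_cons]; exact (continuous_S i).comp ih

lemma isCompact_K : IsCompact K := isCompact_Icc
lemma isClosed_K : IsClosed K := isClosed_Icc
lemma K_nonempty : K.Nonempty := ⟨(0,0), by rw [mem_K_iff]; norm_num⟩

lemma isCompact_Jw (σ : List (Fin 4)) : IsCompact (Jw σ) := isCompact_K.image (continuous_Sw σ)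
lemma measurableSet_Jw (σ : List (Fin 4)) : MeasurableSet (Jw σ) :=
  (isCompact_Jw σ).isClosed.measurableSet

lemma Jw_subset_K (σ : List (Fin 4)) : Jw σ ⊆ K := (Sw_mapsTo σ).image_subset

-- disjointness of first-level cells
lemma S_image_disjoint {i j : Fin 4} (hij : i ≠ j) {x : ℝ × ℝ}
    (hi : x ∈ S i '' K) (hj : x ∈ S j '' K) : False := by
  obtain ⟨p, hp, rfl⟩ := hi
  obtain ⟨q, hq, hq'⟩ := hj
  rw [mem_K_iff] at hp hq
  rw [S_eq, S_eq, Prod.ext_iff] at hq'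
  simp only at hq'
  fin_cases i <;> fin_cases j <;> simp_all [c1, c2] <;> linarith [hq'.1, hq'.2]

lemma dist_S (i : Fin 4) (p q : ℝ × ℝ) : dist (S i p) (S i q) = dist p q / 3 := by
  rw [Prod.dist_eq, Prod.dist_eq, S_eq, S_eq]
  simp only [Real.dist_eq]
  have h1 : |p.1 / 3 + c1 i - (q.1 / 3 + c1 i)| = |p.1 - q.1| / 3 := by
    rw [show p.1 / 3 + c1 i - (q.1 / 3 + c1 i) = (p.1 - q.1) / 3 by ring,
      abs_div, abs_of_pos (by norm_num : (0:ℝ) < 3)]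
  have h2 : |p.2 / 3 + c2 i - (q.2 / 3 + c2 i)| = |p.2 - q.2| / 3 := by
    rw [show p.2 / 3 + c2 i - (q.2 / 3 + c2 i) = (p.2 - q.2) / 3 by ring,
      abs_div, abs_of_pos (by norm_num : (0:ℝ) < 3)]
  rw [h1, h2, max_div_div_right (by norm_num : (0:ℝ) ≤ 3)]

lemma infDist_S_le (i : Fin 4) (x : ℝ × ℝ) :
    Metric.infDist (S i x) K ≤ Metric.infDist x K / 3 := by
  obtain ⟨y, hy, hxy⟩ := isCompact_K.exists_infDist_eq_dist K_nonempty x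
  calc Metric.infDist (S i x) K ≤ dist (S i x) (S i y) :=
        Metric.infDist_le_dist_of_mem (S_mapsTo i hy)
    _ = dist x y / 3 := dist_S i x y
    _ = Metric.infDist x K / 3 := by rw [hxy]

/-- The self-similarity equation `P = (1/4) ∑_{i=1}^4 P ∘ S_i⁻¹`. -/
def SelfSimilar (P : Measure (ℝ × ℝ)) : Prop :=
  P = (1 / 4 : ℝ≥0∞) • P.map (S 0) + (1 / 4 : ℝ≥0∞) • P.map (S 1)
    + (1 / 4 : ℝ≥0∞) • P.map (S 2) + (1 / 4 : ℝ≥0∞) • P.map (S 3)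

lemma integrable_of_bound {Q : Measure (ℝ × ℝ)} [IsFiniteMeasure Q] {f : ℝ × ℝ → ℝ}
    (hf : Measurable f) (C : ℝ) (h : ∀ᵐ x ∂Q, |f x| ≤ C) : Integrable f Q :=
  ⟨hf.aestronglyMeasurable, HasFiniteIntegral.of_bounded (by simpa [Real.norm_eq_abs] using h)⟩

lemma selfsim_int (P : Measure (ℝ × ℝ)) [IsProbabilityMeasure P] (hP : SelfSimilar P)
    (f : ℝ × ℝ → ℝ) (hf : Measurable f) (C : ℝ) (hC : ∀ x, |f x| ≤ C) :
    ∫ x, f x ∂P = (1/4) * (∫ x, f (S 0 x) ∂P + ∫ x, f (S 1 x) ∂P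
      + ∫ x, f (S 2 x) ∂P + ∫ x, f (S 3 x) ∂P) := by
  have hmap : ∀ i : Fin 4, IsProbabilityMeasure (P.map (S i)) :=
    fun i => Measure.isProbabilityMeasure_map (measurable_S i).aemeasurable
  have hintmap : ∀ i : Fin 4, Integrable f (P.map (S i)) := by
    intro i
    have := hmap i
    exact integrable_of_bound hf C (ae_of_all _ hC)
  have hints : ∀ i : Fin 4, Integrable f ((1/4 : ℝ≥0∞) • P.map (S i)) :=
    fun i => (hintmap i).smul_measure (by norm_num)
  have hIM : ∀ i : Fin 4, ∫ x, f x ∂(P.map (S i)) = ∫ x, f (S i x) ∂P :=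
    fun i => integral_map (measurable_S i).aemeasurable hf.aestronglyMeasurable
  conv_lhs => rw [hP]
  rw [integral_add_measure (((hints 0).add_measure (hints 1)).add_measure (hints 2)) (hints 3),
    integral_add_measure ((hints 0).add_measure (hints 1)) (hints 2),
    integral_add_measure (hints 0) (hints 1),
    integral_smul_measure, integral_smul_measure, integral_smul_measure, integral_smul_measure,
    hIM 0, hIM 1, hIM 2, hIM 3]
  have : ((1:ℝ≥0∞)/4).toReal = 1/4 := by
    rw [ENNReal.toReal_div]; simp
  simp only [this, smul_eq_mul]; ring

noncomputable def hfun (n : ℕ) (x : ℝ × ℝ) : ℝ := min (Metric.infDist x K / 3 ^ n) 1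

lemma hfun_nonneg (n : ℕ) (x : ℝ × ℝ) : 0 ≤ hfun n x :=
  le_min (div_nonneg Metric.infDist_nonneg (by positivity)) one_pos.le

lemma hfun_le_one (n : ℕ) (x : ℝ × ℝ) : hfun n x ≤ 1 := min_le_right _ _

lemma hfun_abs (n : ℕ) (x : ℝ × ℝ) : |hfun n x| ≤ 1 :=
  abs_le.2 ⟨by linarith [hfun_nonneg n x], hfun_le_one n x⟩

lemma measurable_hfun (n : ℕ) : Measurable (hfun n) := by
  apply Measurable.min _ measurable_const
  exact ((Metric.continuous_infDist_pt K).div_const _).measurable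

lemma hfun_step (n : ℕ) (i : Fin 4) (x : ℝ × ℝ) : hfun n (S i x) ≤ hfun (n+1) x := by
  unfold hfun
  apply min_le_min _ le_rfl
  have h := div_le_div_of_nonneg_right (infDist_S_le i x) (show (0:ℝ) ≤ 3^n by positivity)
  calc Metric.infDist (S i x) K / 3 ^ n ≤ (Metric.infDist x K / 3) / 3 ^ n := h
    _ = Metric.infDist x K / 3 ^ (n+1) := by ring

lemma integral_hfun_mono (P : Measure (ℝ × ℝ)) [IsProbabilityMeasure P] (hP : SelfSimilar P)
    (n : ℕ) : ∫ x, hfun n x ∂P ≤ ∫ x, hfun (n+1) x ∂P := by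
  have hint : Integrable (hfun (n+1)) P :=
    integrable_of_bound (measurable_hfun _) 1 (ae_of_all _ (hfun_abs _))
  have hinti : ∀ i : Fin 4, Integrable (fun x => hfun n (S i x)) P :=
    fun i => integrable_of_bound ((measurable_hfun n).comp (measurable_S i)) 1
      (ae_of_all _ fun x => hfun_abs n (S i x))
  rw [selfsim_int P hP (hfun n) (measurable_hfun n) 1 (hfun_abs n)]
  have h4 : ∀ i : Fin 4, ∫ x, hfun n (S i x) ∂P ≤ ∫ x, hfun (n+1) x ∂P :=
    fun i => integral_mono (hinti i) hint (fun x => hfun_step n i x)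
  linarith [h4 0, h4 1, h4 2, h4 3]

lemma ae_mem_K (P : Measure (ℝ × ℝ)) [IsProbabilityMeasure P] (hP : SelfSimilar P) :
    ∀ᵐ x ∂P, x ∈ K := by
  have hint : ∀ n, Integrable (hfun n) P :=
    fun n => integrable_of_bound (measurable_hfun n) 1 (ae_of_all _ (hfun_abs n))
  have hmono : ∀ n, ∫ x, hfun 0 x ∂P ≤ ∫ x, hfun n x ∂P := by
    intro n
    induction n with
    | zero => exact le_rfl
    | succ m ih => exact ih.trans (integral_hfun_mono P hP m)
  have hlim : Filter.Tendsto (fun n => ∫ x, hfun n x ∂P) Filter.atTop (nhds 0) := by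
    have := MeasureTheory.tendsto_integral_of_dominated_convergence (μ := P)
      (F := hfun) (f := fun _ => (0:ℝ)) (bound := fun _ => (1:ℝ))
      (fun n => (measurable_hfun n).aestronglyMeasurable)
      (integrable_const 1)
      (fun n => ae_of_all _ fun x => by simpa [Real.norm_eq_abs] using hfun_abs n x)
      (ae_of_all _ fun x => ?_)
    · simpa using this
    · have hd : Filter.Tendsto (fun n => Metric.infDist x K / 3 ^ n) Filter.atTop (nhds 0) := by
        have h3 : Filter.Tendsto (fun n : ℕ => ((1:ℝ)/3) ^ n) Filter.atTop (nhds 0) :=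
          tendsto_pow_atTop_nhds_zero_of_lt_one (by norm_num) (by norm_num)
        have := h3.const_mul (Metric.infDist x K)
        simpa [div_eq_mul_inv, mul_comm, inv_pow, div_pow, one_div] using this
      have := hd.min (tendsto_const_nhds (x := (1:ℝ)))
      simpa [hfun] using this
  have h0 : ∫ x, hfun 0 x ∂P ≤ 0 := ge_of_tendsto' hlim hmono
  have h0' : ∫ x, hfun 0 x ∂P = 0 :=
    le_antisymm h0 (integral_nonneg (hfun_nonneg 0))
  have hae : ∀ᵐ x ∂P, hfun 0 x = 0 := by
    have := (integral_eq_zero_iff_of_nonneg (hfun_nonneg 0) (hint 0)).1 h0'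
    filter_upwards [this.le] with x hx using le_antisymm (by simpa using hx) (hfun_nonneg 0 x)
  filter_upwards [hae] with x hx
  have hd0 : Metric.infDist x K = 0 := by
    unfold hfun at hx
    simp only [pow_zero, div_one] at hx
    rcases le_or_gt (Metric.infDist x K) 1 with h | h
    · rwa [min_eq_left h] at hx
    · rw [min_eq_right h.le] at hx; norm_num at hx
  exact (isClosed_K.mem_iff_infDist_zero K_nonempty).2 hd0

lemma selfsim_int_K (P : Measure (ℝ × ℝ)) [IsProbabilityMeasure P] (hP : SelfSimilar P)
    (f : ℝ × ℝ → ℝ) (hf : Measurable f) (C : ℝ) (hC : ∀ x ∈ K, |f x| ≤ C) :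
    ∫ x, f x ∂P = (1/4) * (∫ x, f (S 0 x) ∂P + ∫ x, f (S 1 x) ∂P
      + ∫ x, f (S 2 x) ∂P + ∫ x, f (S 3 x) ∂P) := by
  set g : ℝ × ℝ → ℝ := K.indicator f with hg
  have hgm : Measurable g := hf.indicator isClosed_K.measurableSet
  have hgb : ∀ x, |g x| ≤ max C 0 := by
    intro x
    by_cases hx : x ∈ K
    · rw [hg, Set.indicator_of_mem hx]; exact (hC x hx).trans (le_max_left _ _)
    · rw [hg, Set.indicator_of_notMem hx]; simp
  have key := selfsim_int P hP g hgm (max C 0) hgb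
  have h0 : ∫ x, g x ∂P = ∫ x, f x ∂P := by
    apply integral_congr_ae
    filter_upwards [ae_mem_K P hP] with x hx using Set.indicator_of_mem hx f
  have hi : ∀ i : Fin 4, ∫ x, g (S i x) ∂P = ∫ x, f (S i x) ∂P := by
    intro i
    apply integral_congr_ae
    filter_upwards [ae_mem_K P hP] with x hx using Set.indicator_of_mem (S_mapsTo i hx) f
  rw [← h0, key, hi 0, hi 1, hi 2, hi 3]

lemma int_lin2 (P : Measure (ℝ × ℝ)) [IsProbabilityMeasure P] (r s t : ℝ)
    (f g : ℝ × ℝ → ℝ) (hf : Integrable f P) (hg : Integrable g P) :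
    ∫ x, (r * f x + s * g x + t) ∂P = r * ∫ x, f x ∂P + s * ∫ x, g x ∂P + t := by
  have hA : Integrable (fun x => r * f x + s * g x) P := by
    exact (hf.const_mul r).add (hg.const_mul s)
  rw [integral_add hA (integrable_const t), integral_add (hf.const_mul r) (hg.const_mul s),
    integral_const_mul, integral_const_mul, integral_const]
  simp

lemma abs_fst_le {x : ℝ × ℝ} (hx : x ∈ K) : |x.1| ≤ 1 := by
  rw [mem_K_iff] at hx; exact abs_le.2 ⟨by linarith [hx.1], hx.2.1⟩

lemma abs_snd_le {x : ℝ × ℝ} (hx : x ∈ K) : |x.2| ≤ 1 := by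
  rw [mem_K_iff] at hx; exact abs_le.2 ⟨by linarith [hx.2.2.1], hx.2.2.2⟩

lemma abs_fst_sq_le {x : ℝ × ℝ} (hx : x ∈ K) : |x.1 ^ 2| ≤ 1 := by
  rw [mem_K_iff] at hx; rw [abs_le]; constructor <;> nlinarith [hx.1, hx.2.1]

lemma abs_snd_sq_le {x : ℝ × ℝ} (hx : x ∈ K) : |x.2 ^ 2| ≤ 1 := by
  rw [mem_K_iff] at hx; rw [abs_le]; constructor <;> nlinarith [hx.2.2.1, hx.2.2.2]

lemma int_fst (P : Measure (ℝ × ℝ)) [IsProbabilityMeasure P] (hP : SelfSimilar P) :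
    Integrable (fun x : ℝ × ℝ => x.1) P := by
  apply integrable_of_bound measurable_fst 1
  filter_upwards [ae_mem_K P hP] with x hx using abs_fst_le hx

lemma int_snd (P : Measure (ℝ × ℝ)) [IsProbabilityMeasure P] (hP : SelfSimilar P) :
    Integrable (fun x : ℝ × ℝ => x.2) P := by
  apply integrable_of_bound measurable_snd 1
  filter_upwards [ae_mem_K P hP] with x hx using abs_snd_le hx

lemma int_fst_sq (P : Measure (ℝ × ℝ)) [IsProbabilityMeasure P] (hP : SelfSimilar P) :
    Integrable (fun x : ℝ × ℝ => x.1 ^ 2) P := by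
  apply integrable_of_bound (measurable_fst.pow_const 2) 1
  filter_upwards [ae_mem_K P hP] with x hx using abs_fst_sq_le hx

lemma int_snd_sq (P : Measure (ℝ × ℝ)) [IsProbabilityMeasure P] (hP : SelfSimilar P) :
    Integrable (fun x : ℝ × ℝ => x.2 ^ 2) P := by
  apply integrable_of_bound (measurable_snd.pow_const 2) 1
  filter_upwards [ae_mem_K P hP] with x hx using abs_snd_sq_le hx

lemma mean_fst (P : Measure (ℝ × ℝ)) [IsProbabilityMeasure P] (hP : SelfSimilar P) :
    ∫ x : ℝ × ℝ, x.1 ∂P = 1/2 := by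
  have key := selfsim_int_K P hP (fun x => x.1) measurable_fst 1 (fun x hx => abs_fst_le hx)
  have e : ∀ i : Fin 4, ∫ x, (S i x).1 ∂P = (1/3) * (∫ x : ℝ × ℝ, x.1 ∂P) + c1 i := by
    intro i
    have h : (fun x : ℝ × ℝ => (S i x).1) = fun x => (1/3) * x.1 + 0 * x.2 + c1 i := by
      funext x; rw [S_eq]; ring
    rw [h, int_lin2 P _ _ _ _ _ (int_fst P hP) (int_snd P hP)]; ring
  rw [e 0, e 1, e 2, e 3] at key
  have hc : c1 0 = 0 ∧ c1 1 = 2/3 ∧ c1 2 = 0 ∧ c1 3 = 2/3 := by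
    refine ⟨?_, ?_, ?_, ?_⟩ <;> simp [c1]
  rw [hc.1, hc.2.1, hc.2.2.1, hc.2.2.2] at key
  linarith

lemma mean_snd (P : Measure (ℝ × ℝ)) [IsProbabilityMeasure P] (hP : SelfSimilar P) :
    ∫ x : ℝ × ℝ, x.2 ∂P = 1/2 := by
  have key := selfsim_int_K P hP (fun x => x.2) measurable_snd 1 (fun x hx => abs_snd_le hx)
  have e : ∀ i : Fin 4, ∫ x, (S i x).2 ∂P = (1/3) * (∫ x : ℝ × ℝ, x.2 ∂P) + c2 i := by
    intro i
    have h : (fun x : ℝ × ℝ => (S i x).2) = fun x => 0 * x.1 + (1/3) * x.2 + c2 i := by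
      funext x; rw [S_eq]; ring
    rw [h, int_lin2 P _ _ _ _ _ (int_fst P hP) (int_snd P hP)]; ring
  rw [e 0, e 1, e 2, e 3] at key
  have hc : c2 0 = 0 ∧ c2 1 = 0 ∧ c2 2 = 2/3 ∧ c2 3 = 2/3 := by
    refine ⟨?_, ?_, ?_, ?_⟩ <;> simp [c2]
  rw [hc.1, hc.2.1, hc.2.2.1, hc.2.2.2] at key
  linarith

lemma sq_fst (P : Measure (ℝ × ℝ)) [IsProbabilityMeasure P] (hP : SelfSimilar P) :
    ∫ x : ℝ × ℝ, x.1 ^ 2 ∂P = 3/8 := by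
  have key := selfsim_int_K P hP (fun x => x.1 ^ 2) (measurable_fst.pow_const 2) 1
    (fun x hx => abs_fst_sq_le hx)
  have e : ∀ i : Fin 4, ∫ x, (S i x).1 ^ 2 ∂P
      = (1/9) * (∫ x : ℝ × ℝ, x.1 ^ 2 ∂P) + (2 * c1 i / 3) * (∫ x : ℝ × ℝ, x.1 ∂P) + c1 i ^ 2 := by
    intro i
    have h : (fun x : ℝ × ℝ => (S i x).1 ^ 2)
        = fun x => (1/9) * x.1 ^ 2 + (2 * c1 i / 3) * x.1 + c1 i ^ 2 := by
      funext x; rw [S_eq]; ring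
    rw [h, int_lin2 P _ _ _ _ _ (int_fst_sq P hP) (int_fst P hP)]
  rw [e 0, e 1, e 2, e 3, mean_fst P hP] at key
  have hc : c1 0 = 0 ∧ c1 1 = 2/3 ∧ c1 2 = 0 ∧ c1 3 = 2/3 := by
    refine ⟨?_, ?_, ?_, ?_⟩ <;> simp [c1]
  rw [hc.1, hc.2.1, hc.2.2.1, hc.2.2.2] at key
  norm_num at key
  linarith

lemma sq_snd (P : Measure (ℝ × ℝ)) [IsProbabilityMeasure P] (hP : SelfSimilar P) :
    ∫ x : ℝ × ℝ, x.2 ^ 2 ∂P = 3/8 := by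
  have key := selfsim_int_K P hP (fun x => x.2 ^ 2) (measurable_snd.pow_const 2) 1
    (fun x hx => abs_snd_sq_le hx)
  have e : ∀ i : Fin 4, ∫ x, (S i x).2 ^ 2 ∂P
      = (1/9) * (∫ x : ℝ × ℝ, x.2 ^ 2 ∂P) + (2 * c2 i / 3) * (∫ x : ℝ × ℝ, x.2 ∂P) + c2 i ^ 2 := by
    intro i
    have h : (fun x : ℝ × ℝ => (S i x).2 ^ 2)
        = fun x => (1/9) * x.2 ^ 2 + (2 * c2 i / 3) * x.2 + c2 i ^ 2 := by
      funext x; rw [S_eq]; ring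
    rw [h, int_lin2 P _ _ _ _ _ (int_snd_sq P hP) (int_snd P hP)]
  rw [e 0, e 1, e 2, e 3, mean_snd P hP] at key
  have hc : c2 0 = 0 ∧ c2 1 = 0 ∧ c2 2 = 2/3 ∧ c2 3 = 2/3 := by
    refine ⟨?_, ?_, ?_, ?_⟩ <;> simp [c2]
  rw [hc.1, hc.2.1, hc.2.2.1, hc.2.2.2] at key
  norm_num at key
  linarith

lemma base_int (P : Measure (ℝ × ℝ)) [IsProbabilityMeasure P] (hP : SelfSimilar P) (a b : ℝ) :
    ∫ x : ℝ × ℝ, ((x.1 - a) ^ 2 + (x.2 - b) ^ 2) ∂P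
      = 1/4 + ((1/2 - a) ^ 2 + (1/2 - b) ^ 2) := by
  have h1 : (fun x : ℝ × ℝ => (x.1 - a) ^ 2 + (x.2 - b) ^ 2)
      = fun x => ((1:ℝ) * x.1 ^ 2 + (-2*a) * x.1 + a^2) + ((1:ℝ) * x.2 ^ 2 + (-2*b) * x.2 + b^2) := by
    funext x; ring
  have hA : Integrable (fun x : ℝ × ℝ => (1:ℝ) * x.1 ^ 2 + (-2*a) * x.1 + a^2) P := by
    exact (((int_fst_sq P hP).const_mul _).add ((int_fst P hP).const_mul _)).add (integrable_const _)
  have hB : Integrable (fun x : ℝ × ℝ => (1:ℝ) * x.2 ^ 2 + (-2*b) * x.2 + b^2) P := by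
    exact (((int_snd_sq P hP).const_mul _).add ((int_snd P hP).const_mul _)).add (integrable_const _)
  rw [h1, integral_add hA hB,
    int_lin2 P _ _ _ _ _ (int_fst_sq P hP) (int_fst P hP),
    int_lin2 P _ _ _ _ _ (int_snd_sq P hP) (int_snd P hP),
    mean_fst P hP, mean_snd P hP, sq_fst P hP, sq_snd P hP]
  ring

lemma Jw_nil : Jw [] = K := by simp [Jw, Sw_nil]

lemma Jw_cons (i : Fin 4) (σ : List (Fin 4)) : Jw (i :: σ) = S i '' Jw σ := by
  rw [Jw, Sw_cons, image_comp]; rfl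

lemma fin4_cases (i : Fin 4) : i = 0 ∨ i = 1 ∨ i = 2 ∨ i = 3 := by
  fin_cases i <;> simp

lemma key (P : Measure (ℝ × ℝ)) [IsProbabilityMeasure P] (hP : SelfSimilar P)
    (σ : List (Fin 4)) : ∀ a b : ℝ,
    ∫ x, (Jw σ).indicator (fun y => (y.1 - a) ^ 2 + (y.2 - b) ^ 2) x ∂P
      = (1 / 4 ^ σ.length) * ((1 / 9 ^ σ.length) * (1 / 4)
          + (((Sw σ (1/2, 1/2)).1 - a) ^ 2 + ((Sw σ (1/2, 1/2)).2 - b) ^ 2)) := by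
  induction σ with
  | nil =>
    intro a b
    have h0 : ∫ x, (Jw []).indicator (fun y => (y.1 - a) ^ 2 + (y.2 - b) ^ 2) x ∂P
        = ∫ x : ℝ × ℝ, ((x.1 - a) ^ 2 + (x.2 - b) ^ 2) ∂P := by
      apply integral_congr_ae
      filter_upwards [ae_mem_K P hP] with x hx
      rw [Jw_nil]
      exact Set.indicator_of_mem hx _
    rw [h0, base_int P hP a b]
    simp [Sw_nil]
  | cons i σ' ih =>
    intro a b
    set q : ℝ × ℝ → ℝ := fun y => (y.1 - a) ^ 2 + (y.2 - b) ^ 2 with hq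
    set a' : ℝ := 3 * (a - c1 i) with ha'
    set b' : ℝ := 3 * (b - c2 i) with hb'
    set q' : ℝ × ℝ → ℝ := fun y => (y.1 - a') ^ 2 + (y.2 - b') ^ 2 with hq'
    have hqm : Measurable q := by
      apply Measurable.add <;> apply Measurable.pow_const <;> fun_prop
    have hfm : Measurable ((Jw (i :: σ')).indicator q) :=
      hqm.indicator (measurableSet_Jw _)
    have hqb : ∀ x ∈ K, |(x.1 - a) ^ 2 + (x.2 - b) ^ 2| ≤ (1 + |a|) ^ 2 + (1 + |b|) ^ 2 := by
      intro x hx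
      have h1 := abs_fst_le hx
      have h2 := abs_snd_le hx
      rw [abs_of_nonneg (by positivity)]
      have e1 : (x.1 - a) ^ 2 ≤ (1 + |a|) ^ 2 := by
        have : |x.1 - a| ≤ 1 + |a| := (abs_sub _ _).trans (by linarith)
        nlinarith [abs_nonneg (x.1 - a), sq_abs (x.1 - a)]
      have e2 : (x.2 - b) ^ 2 ≤ (1 + |b|) ^ 2 := by
        have : |x.2 - b| ≤ 1 + |b| := (abs_sub _ _).trans (by linarith)
        nlinarith [abs_nonneg (x.2 - b), sq_abs (x.2 - b)]
      linarith
    have hfb : ∀ x, |(Jw (i :: σ')).indicator q x| ≤ (1 + |a|) ^ 2 + (1 + |b|) ^ 2 := by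
      intro x
      by_cases hx : x ∈ Jw (i :: σ')
      · rw [Set.indicator_of_mem hx]; exact hqb x (Jw_subset_K _ hx)
      · rw [Set.indicator_of_notMem hx]; simp; positivity
    have master := selfsim_int P hP ((Jw (i :: σ')).indicator q) hfm _ hfb
    -- the j = i term
    have hterm_eq : ∫ x, (Jw (i :: σ')).indicator q (S i x) ∂P
        = (1/9) * ∫ x, (Jw σ').indicator q' x ∂P := by
      have hpt : ∀ x, (Jw (i :: σ')).indicator q (S i x) = (1/9) * (Jw σ').indicator q' x := by
        intro x
        by_cases hx : x ∈ Jw σ'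
        · rw [Set.indicator_of_mem hx, Set.indicator_of_mem (by rw [Jw_cons]; exact mem_image_of_mem _ hx)]
          rw [hq, hq', S_eq]; ring
        · have hnx : S i x ∉ Jw (i :: σ') := by
            rw [Jw_cons]
            rintro ⟨y, hy, hxy⟩
            exact hx (S_inj i hxy ▸ hy)
          rw [Set.indicator_of_notMem hx, Set.indicator_of_notMem hnx, mul_zero]
      rw [show (fun x => (Jw (i :: σ')).indicator q (S i x))
          = fun x => (1/9) * (Jw σ').indicator q' x from funext hpt, integral_const_mul]
    -- the j ≠ i terms
    have hterm_ne : ∀ j : Fin 4, j ≠ i → ∫ x, (Jw (i :: σ')).indicator q (S j x) ∂P = 0 := by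
      intro j hj
      have : ∀ᵐ x ∂P, (Jw (i :: σ')).indicator q (S j x) = 0 := by
        filter_upwards [ae_mem_K P hP] with x hx
        apply Set.indicator_of_notMem
        intro hmem
        have h1 : S j x ∈ S i '' K := by
          rw [Jw_cons] at hmem
          exact image_mono (f := S i) (Jw_subset_K σ') hmem
        exact S_image_disjoint (Ne.symm hj) h1 (mem_image_of_mem _ hx)
      rw [integral_congr_ae this, integral_zero]
    have hT : ∀ j : Fin 4, ∫ x, (Jw (i :: σ')).indicator q (S j x) ∂P
        = if j = i then (1/9) * ∫ x, (Jw σ').indicator q' x ∂P else 0 := by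
      intro j
      by_cases h : j = i
      · rw [if_pos h, h, hterm_eq]
      · rw [if_neg h, hterm_ne j h]
    have hsum : ∫ x, (Jw (i :: σ')).indicator q (S 0 x) ∂P
        + ∫ x, (Jw (i :: σ')).indicator q (S 1 x) ∂P
        + ∫ x, (Jw (i :: σ')).indicator q (S 2 x) ∂P
        + ∫ x, (Jw (i :: σ')).indicator q (S 3 x) ∂P
        = (1/9) * ∫ x, (Jw σ').indicator q' x ∂P := by
      rw [hT 0, hT 1, hT 2, hT 3]
      rcases fin4_cases i with h | h | h | h <;> subst h <;>
        rw [if_pos rfl, if_neg (by decide), if_neg (by decide), if_neg (by decide)] <;> ring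
    rw [master, hsum, ih a' b']
    have hSw : Sw (i :: σ') (1/2, 1/2) = S i (Sw σ' (1/2, 1/2)) := rfl
    rw [hSw, S_eq]
    simp only [List.length_cons, pow_succ, ha', hb']
    ring

/-- Distortion error of a set `α` of points: `∫ min_{a∈α} ‖x−a‖² dP`
(squared Euclidean distance). -/
noncomputable def distortion (P : Measure (ℝ × ℝ)) (α : Set (ℝ × ℝ)) : ℝ :=
  ∫ x, (⨅ a ∈ α, ((x.1 - a.1) ^ 2 + (x.2 - a.2) ^ 2)) ∂P

/-- The `n`-th quantization error. -/
noncomputable def Vq (P : Measure (ℝ × ℝ)) (n : ℕ) : ℝ :=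
  sInf (distortion P '' {α | α.Finite ∧ α.Nonempty ∧ α.ncard ≤ n})

/-- `∫_{J_σ} ‖x − (a,b)‖² dP = (1/4^k)((1/9^k)(1/4) + ‖S_σ(1/2,1/2) − (a,b)‖²)`. -/
theorem stmt_6 (P : Measure (ℝ × ℝ)) [IsProbabilityMeasure P] (hP : SelfSimilar P)
    (k : ℕ) (hk : 1 ≤ k) (σ : Fin k → Fin 4) (a b : ℝ) :
    ∫ x in Jw (List.ofFn σ), ((x.1 - a) ^ 2 + (x.2 - b) ^ 2) ∂P
      = (1 / 4 ^ k) * ((1 / 9 ^ k) * (1 / 4)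
          + (((Sw (List.ofFn σ) (1 / 2, 1 / 2)).1 - a) ^ 2
            + ((Sw (List.ofFn σ) (1 / 2, 1 / 2)).2 - b) ^ 2)) := by
  rw [← integral_indicator (measurableSet_Jw _)]
  have h := key P hP (List.ofFn σ) a b
  rwa [List.length_ofFn] at h
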